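/- Let g₁, g₂ : [−1,1] → ℝ be continuous monotone nondecreasing functions with g₁(−1) = g₂(−1) = 0, and β₁, β₂ ∈ ℝ^p unit vectors. If g₁(xᵀβ₁) = g₂(xᵀβ₂) for all x in the closed unit ball of ℝ^p, and g₁ is non-constant, then β₁ = β₂ and g₁ = g₂ on [−1,1]. -/

import Mathlib

/-- Identifiability of the monotone single index model. If `g₁, g₂` are
continuous monotone nondecreasing on `[−1,1]` with `g₁(−1) = g₂(−1) = 0`, `β₁, β₂` are
unit vectors in `ℝᵖ`, `g₁(xᵀβ₁) = g₂(xᵀβ₂)` for all `x` in the closed unit ball, and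
`g₁` is non-constant, then `β₁ = β₂` and `g₁ = g₂` on `[−1,1]`. -/
theorem monotone_sim_identifiable (p : ℕ)
    (g₁ g₂ : ℝ → ℝ) (β₁ β₂ : EuclideanSpace ℝ (Fin p))
    (hc₁ : ContinuousOn g₁ (Set.Icc (-1 : ℝ) 1)) (hc₂ : ContinuousOn g₂ (Set.Icc (-1 : ℝ) 1))
    (hm₁ : MonotoneOn g₁ (Set.Icc (-1 : ℝ) 1)) (hm₂ : MonotoneOn g₂ (Set.Icc (-1 : ℝ) 1))
    (h0₁ : g₁ (-1) = 0) (h0₂ : g₂ (-1) = 0)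
    (hβ₁ : ‖β₁‖ = 1) (hβ₂ : ‖β₂‖ = 1)
    (heq : ∀ x : EuclideanSpace ℝ (Fin p), ‖x‖ ≤ 1 →
      g₁ (inner ℝ x β₁ : ℝ) = g₂ (inner ℝ x β₂ : ℝ))
    (hnc : ∃ s ∈ Set.Icc (-1 : ℝ) 1, ∃ t ∈ Set.Icc (-1 : ℝ) 1, s < t ∧ g₁ s < g₁ t) :
    β₁ = β₂ ∧ ∀ u ∈ Set.Icc (-1 : ℝ) 1, g₁ u = g₂ u := by
  set c : ℝ := (inner ℝ β₁ β₂ : ℝ) with hc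
  have hcabs : |c| ≤ 1 := by
    have := abs_real_inner_le_norm β₁ β₂
    simpa [hc, hβ₁, hβ₂] using this
  -- key identities
  have key₁ : ∀ u ∈ Set.Icc (-1:ℝ) 1, g₁ u = g₂ (c * u) := by
    intro u hu
    have hun : ‖(u • β₁ : EuclideanSpace ℝ (Fin p))‖ ≤ 1 := by
      rw [norm_smul, hβ₁]
      simpa using abs_le.mpr ⟨hu.1, hu.2⟩
    have h := heq (u • β₁) hun
    rw [real_inner_smul_left, real_inner_smul_left, real_inner_self_eq_norm_sq, hβ₁] at h
    simpa [hc, mul_comm] using h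
  have key₂ : ∀ u ∈ Set.Icc (-1:ℝ) 1, g₂ u = g₁ (c * u) := by
    intro u hu
    have hun : ‖(u • β₂ : EuclideanSpace ℝ (Fin p))‖ ≤ 1 := by
      rw [norm_smul, hβ₂]
      simpa using abs_le.mpr ⟨hu.1, hu.2⟩
    have h := heq (u • β₂) hun
    rw [real_inner_smul_left, real_inner_smul_left, real_inner_self_eq_norm_sq, hβ₂] at h
    have h' : g₂ u = g₁ (u * (inner ℝ β₂ β₁ : ℝ)) := by simpa using h.symm
    rw [h', hc, real_inner_comm β₁ β₂, mul_comm]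
  have hmemc : ∀ u ∈ Set.Icc (-1:ℝ) 1, c * u ∈ Set.Icc (-1:ℝ) 1 := by
    intro u hu
    have : |c * u| ≤ 1 := by
      rw [abs_mul]
      have h1 : |u| ≤ 1 := abs_le.mpr ⟨hu.1, hu.2⟩
      calc |c| * |u| ≤ 1 * 1 := by
            apply mul_le_mul hcabs h1 (abs_nonneg _) zero_le_one
        _ = 1 := by ring
    exact ⟨(abs_le.mp this).1, (abs_le.mp this).2⟩
  obtain ⟨s, hs, t, ht, hst, hg⟩ := hnc
  -- rule out c = -1
  have hcne : c ≠ -1 := by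
    intro h
    have h1 : g₁ s = g₂ (-s) := by simpa [h] using key₁ s hs
    have h2 : g₁ t = g₂ (-t) := by simpa [h] using key₁ t ht
    have hns : -s ∈ Set.Icc (-1:ℝ) 1 := ⟨by linarith [hs.2], by linarith [hs.1]⟩
    have hnt : -t ∈ Set.Icc (-1:ℝ) 1 := ⟨by linarith [ht.2], by linarith [ht.1]⟩
    have := hm₂ hnt hns (by linarith)
    linarith
  have hc1 : c = 1 := by
    by_contra hne
    have hclt : c < 1 := lt_of_le_of_ne (abs_le.mp hcabs).2 hne
    have hcgt : -1 < c := lt_of_le_of_ne (abs_le.mp hcabs).1 (Ne.symm hcne)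
    have habs : |c| < 1 := abs_lt.mpr ⟨hcgt, hclt⟩
    have hsq : c ^ 2 < 1 := by nlinarith
    have hsq0 : (0:ℝ) ≤ c ^ 2 := sq_nonneg c
    -- g₁ u = g₁ (c² u)
    have step : ∀ u ∈ Set.Icc (-1:ℝ) 1, g₁ u = g₁ (c ^ 2 * u) := by
      intro u hu
      have := key₁ u hu
      have h2 := key₂ (c * u) (hmemc u hu)
      rw [this, h2]
      ring_nf
    -- iterate
    have hmemn : ∀ u ∈ Set.Icc (-1:ℝ) 1, ∀ n : ℕ, (c ^ 2) ^ n * u ∈ Set.Icc (-1:ℝ) 1 := by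
      intro u hu n
      have h1 : |(c ^ 2) ^ n| ≤ 1 := by
        rw [abs_pow]
        exact pow_le_one₀ (abs_nonneg _) (by rw [abs_of_nonneg hsq0]; nlinarith)
      have h2 : |u| ≤ 1 := abs_le.mpr ⟨hu.1, hu.2⟩
      have : |(c ^ 2) ^ n * u| ≤ 1 := by
        rw [abs_mul]
        calc |(c ^ 2) ^ n| * |u| ≤ 1 * 1 :=
              mul_le_mul h1 h2 (abs_nonneg _) zero_le_one
          _ = 1 := by ring
      exact ⟨(abs_le.mp this).1, (abs_le.mp this).2⟩
    have hiter : ∀ u ∈ Set.Icc (-1:ℝ) 1, ∀ n : ℕ, g₁ u = g₁ ((c ^ 2) ^ n * u) := by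
      intro u hu n
      induction n with
      | zero => simp
      | succ n ih =>
        rw [ih]
        have := step ((c ^ 2) ^ n * u) (hmemn u hu n)
        rw [this]
        ring_nf
    have hconst : ∀ u ∈ Set.Icc (-1:ℝ) 1, g₁ u = g₁ 0 := by
      intro u hu
      have htend : Filter.Tendsto (fun n : ℕ => (c ^ 2) ^ n * u) Filter.atTop (nhds 0) := by
        have := (tendsto_pow_atTop_nhds_zero_of_lt_one hsq0 hsq).mul_const u
        simpa using this
      have h0mem : (0:ℝ) ∈ Set.Icc (-1:ℝ) 1 := by norm_num
      have hcw : ContinuousWithinAt g₁ (Set.Icc (-1:ℝ) 1) 0 := hc₁ 0 h0mem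
      have htend2 : Filter.Tendsto (fun n : ℕ => g₁ ((c ^ 2) ^ n * u)) Filter.atTop
          (nhds (g₁ 0)) := by
        apply hcw.tendsto.comp
        rw [tendsto_nhdsWithin_iff]
        exact ⟨htend, Filter.Eventually.of_forall fun n => hmemn u hu n⟩
      have hconst' : Filter.Tendsto (fun _ : ℕ => g₁ u) Filter.atTop (nhds (g₁ 0)) := by
        apply htend2.congr
        intro n
        exact (hiter u hu n).symm
      exact (tendsto_nhds_unique hconst' tendsto_const_nhds).symm
    have := hconst s hs
    have := hconst t ht
    linarith
  constructor
  · have hnorm : ‖β₁ - β₂‖ ^ 2 = 0 := by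
      rw [norm_sub_sq_real, hβ₁, hβ₂, ← hc, hc1]
      ring
    have := sq_eq_zero_iff.mp hnorm
    rw [norm_eq_zero] at this
    exact sub_eq_zero.mp this
  · intro u hu
    have := key₁ u hu
    rw [hc1] at this
    simpa using this
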